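/- Pinsker's inequality: for probability measures Q and P on a measurable space, the total variation distance satisfies TV(Q, P) ≤ sqrt(KL(Q‖P)/2). -/

import Mathlib

open MeasureTheory


lemma aux_log_ge {x : ℝ} (hx : 0 < x) : 1 - x⁻¹ ≤ Real.log x := by
  have h := Real.log_le_sub_one_of_pos (inv_pos.mpr hx)
  rw [Real.log_inv] at h
  linarith

lemma aux_psi_nonneg (x : ℝ) (hx : 0 ≤ x) : 0 ≤ x * Real.log x - x + 1 := by
  rcases hx.eq_or_lt with h | h
  · simp [← h]
  · have h1 := aux_log_ge h
    have h2 : x * (1 - x⁻¹) ≤ x * Real.log x := by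
      exact mul_le_mul_of_nonneg_left h1 h.le
    have hxx : x * x⁻¹ = 1 := mul_inv_cancel₀ h.ne'
    nlinarith

noncomputable def hfun (x : ℝ) : ℝ := (x + 1) * Real.log x - 2 * (x - 1)

lemma hfun_hasDeriv {x : ℝ} (hx : 0 < x) :
    HasDerivAt hfun (Real.log x + x⁻¹ - 1) x := by
  have h1 : HasDerivAt (fun y : ℝ => (y + 1) * Real.log y)
      (1 * Real.log x + (x + 1) * x⁻¹) x :=
    ((hasDerivAt_id x).add_const 1).mul (Real.hasDerivAt_log hx.ne')
  have h2 : HasDerivAt (fun y : ℝ => 2 * (y - 1)) 2 x := by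
    simpa using ((hasDerivAt_id x).sub_const 1).const_mul 2
  have := h1.sub h2
  refine this.congr_deriv ?_
  have hxx : x * x⁻¹ = 1 := mul_inv_cancel₀ hx.ne'
  field_simp
  ring

lemma hfun_mono : MonotoneOn hfun (Set.Ioi 0) := by
  refine monotoneOn_of_deriv_nonneg (convex_Ioi 0) ?_ ?_ ?_
  · exact fun x hx => ((hfun_hasDeriv (Set.mem_Ioi.mp hx)).continuousAt).continuousWithinAt
  · intro x hx
    rw [interior_Ioi] at hx
    exact ((hfun_hasDeriv (Set.mem_Ioi.mp hx)).differentiableAt).differentiableWithinAt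
  · intro x hx
    rw [interior_Ioi] at hx
    have h := Set.mem_Ioi.mp hx
    rw [(hfun_hasDeriv h).deriv]
    have := aux_log_ge h
    linarith

lemma hfun_one : hfun 1 = 0 := by simp [hfun]

noncomputable def gfun (x : ℝ) : ℝ :=
  (2 * x + 4) * (x * Real.log x - x + 1) - 3 * (x - 1) ^ 2

lemma gfun_hasDeriv {x : ℝ} (hx : 0 < x) :
    HasDerivAt gfun (4 * hfun x) x := by
  have hlog : HasDerivAt (fun y : ℝ => y * Real.log y) (Real.log x + 1) x := by
    have := (hasDerivAt_id x).mul (Real.hasDerivAt_log hx.ne')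
    refine this.congr_deriv ?_
    field_simp
    simp only [id]; ring
  have h1 : HasDerivAt (fun y : ℝ => (2 * y + 4) * (y * Real.log y - y + 1))
      (2 * (x * Real.log x - x + 1) + (2 * x + 4) * (Real.log x + 1 - 1)) x := by
    have ha : HasDerivAt (fun y : ℝ => 2 * y + 4) 2 x := by
      simpa using ((hasDerivAt_id x).const_mul 2).add_const 4
    have hb : HasDerivAt (fun y : ℝ => y * Real.log y - y + 1) (Real.log x + 1 - 1) x :=
      (hlog.sub (hasDerivAt_id x)).add_const 1
    exact ha.mul hb
  have h2 : HasDerivAt (fun y : ℝ => 3 * (y - 1) ^ 2) (3 * (2 * (x - 1))) x := by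
    have : HasDerivAt (fun y : ℝ => (y - 1) ^ 2) (2 * (x - 1) ^ 1 * 1) x :=
      (((hasDerivAt_id x).sub_const 1)).pow 2
    simpa using this.const_mul 3
  have := h1.sub h2
  refine this.congr_deriv ?_
  simp [hfun]
  ring

lemma gfun_nonneg (x : ℝ) (hx : 0 ≤ x) : 0 ≤ gfun x := by
  rcases hx.eq_or_lt with h | hpos
  · simp [gfun, ← h]; norm_num
  have g1 : gfun 1 = 0 := by simp [gfun]
  rcases le_total x 1 with hle | hge
  · -- antitone on Ioc 0 1
    have hanti : AntitoneOn gfun (Set.Ioc 0 1) := by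
      refine antitoneOn_of_deriv_nonpos (convex_Ioc 0 1) ?_ ?_ ?_
      · exact fun y hy => ((gfun_hasDeriv hy.1).continuousAt).continuousWithinAt
      · intro y hy
        rw [interior_Ioc] at hy
        exact ((gfun_hasDeriv hy.1).differentiableAt).differentiableWithinAt
      · intro y hy
        rw [interior_Ioc] at hy
        rw [(gfun_hasDeriv hy.1).deriv]
        have : hfun y ≤ hfun 1 := hfun_mono hy.1 (by norm_num) hy.2.le
        rw [hfun_one] at this
        linarith
    have := hanti ⟨hpos, hle⟩ (by norm_num : (1:ℝ) ∈ Set.Ioc (0:ℝ) 1) hle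
    rw [g1] at this; exact this
  · have hmono : MonotoneOn gfun (Set.Ici 1) := by
      refine monotoneOn_of_deriv_nonneg (convex_Ici 1) ?_ ?_ ?_
      · exact fun y hy => ((gfun_hasDeriv (lt_of_lt_of_le one_pos hy)).continuousAt).continuousWithinAt
      · intro y hy
        rw [interior_Ici] at hy
        exact ((gfun_hasDeriv (lt_trans one_pos hy)).differentiableAt).differentiableWithinAt
      · intro y hy
        rw [interior_Ici] at hy
        rw [(gfun_hasDeriv (lt_trans one_pos hy)).deriv]
        have : hfun 1 ≤ hfun y := hfun_mono (by norm_num) (show (0:ℝ) < y from lt_trans one_pos hy) hy.le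
        rw [hfun_one] at this
        linarith
    have := hmono (by norm_num : (1:ℝ) ∈ Set.Ici (1:ℝ)) hge hge
    rw [g1] at this; exact this

lemma key_ineq (x : ℝ) (hx : 0 ≤ x) :
    3 * (x - 1) ^ 2 ≤ (2 * x + 4) * (x * Real.log x - x + 1) := by
  have := gfun_nonneg x hx
  unfold gfun at this
  linarith

/-- Kullback–Leibler divergence `KL(Q‖P) = ∫ log(dQ/dP) dQ`. -/
noncomputable def klReal {α : Type*} [MeasurableSpace α] (Q P : Measure α) : ℝ :=
  ∫ x, Real.log ((Q.rnDeriv P x).toReal) ∂Q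

/-- Pinsker's inequality: the total variation distance
`TV(Q,P) = sup_A |Q(A) − P(A)|` satisfies `TV(Q, P) ≤ sqrt(KL(Q‖P)/2)`. -/
theorem stmt16 {α : Type*} [MeasurableSpace α] (Q P : Measure α)
    [IsProbabilityMeasure Q] [IsProbabilityMeasure P] (hQP : Q ≪ P)
    (hint : Integrable (fun x => Real.log ((Q.rnDeriv P x).toReal)) Q) :
    (⨆ A : {s : Set α // MeasurableSet s}, |(Q A.1).toReal - (P A.1).toReal|) ≤
      Real.sqrt (klReal Q P / 2) := by
  set f : α → ℝ := fun x => (Q.rnDeriv P x).toReal with hf_def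
  have hfm : Measurable f := (Measure.measurable_rnDeriv Q P).ennreal_toReal
  have hf0 : ∀ x, 0 ≤ f x := fun x => ENNReal.toReal_nonneg
  have hfint : Integrable f P := Measure.integrable_toReal_rnDeriv
  have hf1 : ∫ x, f x ∂P = 1 := by
    rw [hf_def, Measure.integral_toReal_rnDeriv hQP]; simp
  have hKL : klReal Q P = ∫ x, f x * Real.log (f x) ∂P := by
    rw [klReal, ← MeasureTheory.integral_rnDeriv_smul hQP]
    simp_rw [smul_eq_mul]
    rfl
  have hKLint : Integrable (fun x => f x * Real.log (f x)) P := by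
    have := (MeasureTheory.integrable_rnDeriv_smul_iff hQP).mpr hint
    simpa [smul_eq_mul] using this
  set φ : α → ℝ := fun x => f x * Real.log (f x) - f x + 1 with hφ_def
  have hφint : Integrable φ P := (hKLint.sub hfint).add (integrable_const 1)
  have hφ0 : ∀ x, 0 ≤ φ x := fun x => aux_psi_nonneg _ (hf0 x)
  have hφeq : ∫ x, φ x ∂P = klReal Q P := by
    have hsub1 : Integrable (fun x => f x * Real.log (f x) - f x) P := hKLint.sub hfint
    have h1 : ∫ x, (f x * Real.log (f x) - f x + 1) ∂P
        = (∫ x, (f x * Real.log (f x) - f x) ∂P) + ∫ x, (1:ℝ) ∂P :=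
      integral_add hsub1 (integrable_const 1)
    have h2 : ∫ x, (f x * Real.log (f x) - f x) ∂P
        = (∫ x, f x * Real.log (f x) ∂P) - ∫ x, f x ∂P := integral_sub hKLint hfint
    show ∫ x, (f x * Real.log (f x) - f x + 1) ∂P = klReal Q P
    rw [h1, h2, hf1, hKL, integral_const]
    simp
  have hK0 : 0 ≤ klReal Q P := hφeq ▸ integral_nonneg hφ0
  -- Cauchy–Schwarz step
  set u : α → ℝ := fun x => Real.sqrt (2 * f x + 4) with hu_def
  set v : α → ℝ := fun x => |f x - 1| / Real.sqrt (2 * f x + 4) with hv_def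
  have hb : ∀ x, (0:ℝ) < 2 * f x + 4 := fun x => by have := hf0 x; linarith
  have hbs : ∀ x, Real.sqrt (2 * f x + 4) ≠ 0 :=
    fun x => (Real.sqrt_pos.mpr (hb x)).ne'
  have huv : ∀ x, u x * v x = |f x - 1| := by
    intro x; rw [hu_def, hv_def, mul_comm, div_mul_cancel₀ _ (hbs x)]
  have hu2 : ∀ x, u x ^ 2 = 2 * f x + 4 := fun x => Real.sq_sqrt (hb x).le
  have hv2 : ∀ x, v x ^ 2 = (f x - 1) ^ 2 / (2 * f x + 4) := by
    intro x
    rw [hv_def]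
    rw [div_pow, sq_abs, Real.sq_sqrt (hb x).le]
  have hv2le : ∀ x, v x ^ 2 ≤ φ x / 3 := by
    intro x
    have hφx : φ x = f x * Real.log (f x) - f x + 1 := rfl
    rw [hv2, hφx, div_le_div_iff₀ (hb x) (by norm_num : (0:ℝ) < 3)]
    have h := key_ineq (f x) (hf0 x)
    nlinarith [h]
  have hum : Measurable u := ((hfm.const_mul 2).add_const 4).sqrt
  have hvm : Measurable v := (hfm.sub_const 1).abs.div hum
  have hu2int : Integrable (fun x => u x ^ 2) P := by
    simp_rw [hu2]; exact (hfint.const_mul 2).add (integrable_const 4)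
  have hv2int : Integrable (fun x => v x ^ 2) P := by
    refine Integrable.mono' (hφint.div_const 3) (hvm.pow_const 2).aestronglyMeasurable ?_
    filter_upwards with x
    rw [Real.norm_of_nonneg (sq_nonneg _)]
    exact hv2le x
  have hu_mem : MemLp u (ENNReal.ofReal 2) P := by
    rw [show ENNReal.ofReal 2 = 2 by simp]
    exact (memLp_two_iff_integrable_sq hum.aestronglyMeasurable).mpr hu2int
  have hv_mem : MemLp v (ENNReal.ofReal 2) P := by
    rw [show ENNReal.ofReal 2 = 2 by simp]
    exact (memLp_two_iff_integrable_sq hvm.aestronglyMeasurable).mpr hv2int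
  have hcs := integral_mul_le_Lp_mul_Lq_of_nonneg (f := u) (g := v)
    (Real.holderConjugate_iff.mpr ⟨one_lt_two, by norm_num⟩ : Real.HolderConjugate 2 2)
    (Filter.Eventually.of_forall fun x => Real.sqrt_nonneg _)
    (Filter.Eventually.of_forall fun x =>
      div_nonneg (abs_nonneg _) (Real.sqrt_nonneg _))
    hu_mem hv_mem
  simp_rw [Real.rpow_two, huv] at hcs
  have hint_u2 : ∫ x, u x ^ 2 ∂P = 6 := by
    simp_rw [hu2]
    rw [integral_add ((hfint.const_mul 2)) (integrable_const 4),
      integral_const_mul, hf1, integral_const]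
    norm_num
  have hint_v2 : ∫ x, v x ^ 2 ∂P ≤ klReal Q P / 3 := by
    calc ∫ x, v x ^ 2 ∂P ≤ ∫ x, φ x / 3 ∂P :=
          integral_mono hv2int (hφint.div_const 3) hv2le
      _ = klReal Q P / 3 := by rw [integral_div, hφeq]
  have habs : ∫ x, |f x - 1| ∂P ≤ Real.sqrt (2 * klReal Q P) := by
    calc ∫ x, |f x - 1| ∂P
        ≤ (∫ x, u x ^ 2 ∂P) ^ ((1:ℝ)/2) * (∫ x, v x ^ 2 ∂P) ^ ((1:ℝ)/2) := hcs
      _ = Real.sqrt (∫ x, u x ^ 2 ∂P) * Real.sqrt (∫ x, v x ^ 2 ∂P) := by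
          rw [← Real.sqrt_eq_rpow, ← Real.sqrt_eq_rpow]
      _ ≤ Real.sqrt 6 * Real.sqrt (klReal Q P / 3) := by
          rw [hint_u2]
          exact mul_le_mul_of_nonneg_left (Real.sqrt_le_sqrt hint_v2)
            (Real.sqrt_nonneg _)
      _ = Real.sqrt (6 * (klReal Q P / 3)) := (Real.sqrt_mul (by norm_num) _).symm
      _ = Real.sqrt (2 * klReal Q P) := by ring_nf
  -- per-set bound
  have hbound : ∀ A : {s : Set α // MeasurableSet s},
      |(Q A.1).toReal - (P A.1).toReal| ≤ Real.sqrt (klReal Q P / 2) := by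
    rintro ⟨A, hA⟩
    have hsub : Integrable (fun x => f x - 1) P := hfint.sub (integrable_const 1)
    have hQA : ∫ x in A, f x ∂P = (Q A).toReal :=
      Measure.setIntegral_toReal_rnDeriv hQP A
    have hPA : ∫ x in A, (1:ℝ) ∂P = (P A).toReal := by
      rw [setIntegral_const]; simp; rfl
    have heqA : ∫ x in A, (f x - 1) ∂P = (Q A).toReal - (P A).toReal := by
      rw [integral_sub (hfint.integrableOn) ((integrable_const 1).integrableOn)]
      rw [hQA, hPA]
    have hzero : ∫ x in A, (f x - 1) ∂P + ∫ x in Aᶜ, (f x - 1) ∂P = 0 := by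
      rw [integral_add_compl hA hsub, integral_sub hfint (integrable_const 1), hf1]
      simp
    have habs_split : ∫ x in A, |f x - 1| ∂P + ∫ x in Aᶜ, |f x - 1| ∂P
        = ∫ x, |f x - 1| ∂P := integral_add_compl hA hsub.abs
    have h1 : |∫ x in A, (f x - 1) ∂P| ≤ ∫ x in A, |f x - 1| ∂P := by
      simpa [Real.norm_eq_abs] using
        norm_integral_le_integral_norm (μ := P.restrict A) (fun x => f x - 1)
    have h2 : |∫ x in Aᶜ, (f x - 1) ∂P| ≤ ∫ x in Aᶜ, |f x - 1| ∂P := by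
      simpa [Real.norm_eq_abs] using
        norm_integral_le_integral_norm (μ := P.restrict Aᶜ) (fun x => f x - 1)
    have hhalf : |∫ x in A, (f x - 1) ∂P| ≤ (∫ x, |f x - 1| ∂P) / 2 := by
      have : |∫ x in A, (f x - 1) ∂P| = |∫ x in Aᶜ, (f x - 1) ∂P| := by
        rw [show ∫ x in A, (f x - 1) ∂P = -∫ x in Aᶜ, (f x - 1) ∂P by linarith]
        rw [abs_neg]
      linarith [h1, h2, this]
    rw [← heqA]
    calc |∫ x in A, (f x - 1) ∂P| ≤ (∫ x, |f x - 1| ∂P) / 2 := hhalf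
      _ ≤ Real.sqrt (2 * klReal Q P) / 2 := by linarith [habs]
      _ = Real.sqrt (klReal Q P / 2) := by
          rw [show (2:ℝ) * klReal Q P = 4 * (klReal Q P / 2) by ring,
            Real.sqrt_mul (by norm_num : (0:ℝ) ≤ 4)]
          rw [show Real.sqrt 4 = 2 by
            rw [show (4:ℝ) = 2^2 by norm_num, Real.sqrt_sq (by norm_num)]]
          ring
  haveI : Nonempty {s : Set α // MeasurableSet s} := ⟨⟨∅, MeasurableSet.empty⟩⟩
  exact ciSup_le hbound
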